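/- Let X = (X_1, …, X_n) be a random vector with values in {0,1}^n that is negatively associated. Then for every submodular function f : 2^{{1,…,n}} → ℝ one has E[f({i : X_i = 1})] ≥ F(E[X_1], …, E[X_n]), where F is the multilinear extension of f. -/

import Mathlib

open MeasureTheory

/-- `f : 2^E → ℝ` is submodular. -/
def Submodular {E : Type} [DecidableEq E] (f : Finset E → ℝ) : Prop :=
  ∀ S T : Finset E, S ⊆ T → ∀ e ∉ T,
    f (insert e T) - f T ≤ f (insert e S) - f S

/-- The multilinear extension `F(x) = ∑_{S⊆E} f(S) ∏_{i∈S} x_i ∏_{i∉S} (1−x_i)`. -/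
noncomputable def multilinear {E : Type} [Fintype E] [DecidableEq E]
    (f : Finset E → ℝ) (x : E → ℝ) : ℝ :=
  ∑ S : Finset E, f S * (∏ i ∈ S, x i) * ∏ i ∈ Sᶜ, (1 - x i)

/-- `f` depends only on the coordinates in `S`. -/
def DependsOnCoords {n : ℕ} (f : (Fin n → ℝ) → ℝ) (S : Finset (Fin n)) : Prop :=
  ∀ x y : Fin n → ℝ, (∀ i ∈ S, x i = y i) → f x = f y

/-- The random vector `X` is negatively associated: every two coordinatewise-nondecreasing
functions of disjoint sets of coordinates have nonpositive covariance, i.e.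
`E[f·g] ≤ E[f]·E[g]`. -/
def NegAssoc {n : ℕ} {Ω : Type} [MeasurableSpace Ω] (μ : Measure Ω)
    (X : Fin n → Ω → ℝ) : Prop :=
  ∀ (f g : (Fin n → ℝ) → ℝ) (S T : Finset (Fin n)),
    Monotone f → Monotone g → Disjoint S T →
    DependsOnCoords f S → DependsOnCoords g T →
    ∫ ω, f (fun i => X i ω) * g (fun i => X i ω) ∂μ ≤
      (∫ ω, f (fun i => X i ω) ∂μ) * ∫ ω, g (fun i => X i ω) ∂μ

namespace Aux14

variable {n : ℕ}

noncomputable def ext (f : Finset (Fin n) → ℝ) (p : Fin n → ℝ) (A T : Finset (Fin n)) : ℝ :=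
  ∑ S ∈ A.powerset, f (S ∪ (T \ A)) * ((∏ i ∈ S, p i) * ∏ i ∈ A \ S, (1 - p i))

lemma ext_empty (f : Finset (Fin n) → ℝ) (p : Fin n → ℝ) (T : Finset (Fin n)) :
    ext f p ∅ T = f T := by
  simp [ext]

lemma ext_univ (f : Finset (Fin n) → ℝ) (p : Fin n → ℝ) (T : Finset (Fin n)) :
    ext f p Finset.univ T = multilinear f p := by
  rw [ext, multilinear, Finset.powerset_univ]
  refine Finset.sum_congr rfl fun S _ => ?_
  rw [Finset.sdiff_eq_empty_iff_subset.mpr (Finset.subset_univ T), Finset.union_empty,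
    ← Finset.compl_eq_univ_sdiff, mul_assoc]

lemma ext_congr (f : Finset (Fin n) → ℝ) (p : Fin n → ℝ) {A T T' : Finset (Fin n)}
    (h : T \ A = T' \ A) : ext f p A T = ext f p A T' := by
  unfold ext; rw [h]

lemma ext_insert (f : Finset (Fin n) → ℝ) (p : Fin n → ℝ) {A : Finset (Fin n)}
    {i : Fin n} (hi : i ∉ A) (T : Finset (Fin n)) :
    ext f p (insert i A) T
      = p i * ext f p A (insert i T) + (1 - p i) * ext f p A (T.erase i) := by
  classical
  rw [ext, Finset.powerset_insert, Finset.sum_union, Finset.sum_image]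
  · have h1 : ∀ S ∈ A.powerset,
        f (insert i S ∪ (T \ insert i A)) *
          ((∏ j ∈ insert i S, p j) * ∏ j ∈ insert i A \ insert i S, (1 - p j))
        = p i * (f (S ∪ (insert i T \ A)) * ((∏ j ∈ S, p j) * ∏ j ∈ A \ S, (1 - p j))) := by
      intro S hS
      rw [Finset.mem_powerset] at hS
      have hiS : i ∉ S := fun h => hi (hS h)
      have e1 : insert i S ∪ (T \ insert i A) = S ∪ (insert i T \ A) := by
        ext x
        simp only [Finset.mem_union, Finset.mem_insert, Finset.mem_sdiff]
        constructor
        · rintro (⟨rfl | hx⟩ | ⟨hx, hx2⟩) <;> try tauto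
        · rintro (hx | ⟨(rfl | hx), hx2⟩) <;> tauto
      have e2 : insert i A \ insert i S = A \ S := by
        ext x
        simp only [Finset.mem_sdiff, Finset.mem_insert]
        constructor
        · rintro ⟨rfl | hx, hx2⟩ <;> tauto
        · rintro ⟨hx, hx2⟩
          refine ⟨Or.inr hx, ?_⟩
          rintro (rfl | h) <;> [exact hi hx; exact hx2 h]
      rw [e1, e2, Finset.prod_insert hiS]
      ring
    have h2 : ∀ S ∈ A.powerset,
        f (S ∪ (T \ insert i A)) * ((∏ j ∈ S, p j) * ∏ j ∈ insert i A \ S, (1 - p j))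
        = (1 - p i) * (f (S ∪ (T.erase i \ A)) * ((∏ j ∈ S, p j) * ∏ j ∈ A \ S, (1 - p j))) := by
      intro S hS
      rw [Finset.mem_powerset] at hS
      have hiS : i ∉ S := fun h => hi (hS h)
      have e1 : T \ insert i A = T.erase i \ A := by
        ext x
        simp only [Finset.mem_sdiff, Finset.mem_insert, Finset.mem_erase]
        tauto
      have e2 : insert i A \ S = insert i (A \ S) := by
        ext x
        simp only [Finset.mem_sdiff, Finset.mem_insert]
        constructor
        · tauto
        · rintro (rfl | ⟨hx1, hx2⟩)
          · exact ⟨Or.inl rfl, hiS⟩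
          · exact ⟨Or.inr hx1, hx2⟩
      have hiAS : i ∉ A \ S := fun h => hi (Finset.mem_sdiff.mp h).1
      rw [e1, e2, Finset.prod_insert hiAS]
      ring
    rw [Finset.sum_congr rfl h2, Finset.sum_congr rfl h1, ← Finset.mul_sum, ← Finset.mul_sum,
      add_comm]
    rfl
  · intro S hS S' hS' h
    rw [Finset.mem_coe, Finset.mem_powerset] at hS hS'
    have hiS : i ∉ S := fun hh => hi (hS hh)
    have hiS' : i ∉ S' := fun hh => hi (hS' hh)
    calc S = (insert i S).erase i := (Finset.erase_insert hiS).symm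
    _ = (insert i S').erase i := by rw [h]
    _ = S' := Finset.erase_insert hiS'
  · rw [Finset.disjoint_left]
    intro S hS hS'
    rw [Finset.mem_powerset] at hS
    rcases Finset.mem_image.mp hS' with ⟨S', _, rfl⟩
    exact hi (hS (Finset.mem_insert_self i S'))

end Aux14

namespace Aux14
variable {n : ℕ}

lemma ext_pointwise (f : Finset (Fin n) → ℝ) (p : Fin n → ℝ) (A T : Finset (Fin n))
    (i : Fin n) (χ : ℝ) (h : (χ = 1 ∧ i ∈ T) ∨ (χ = 0 ∧ i ∉ T)) :
    ext f p A T = χ * ext f p A (insert i T) + (1 - χ) * ext f p A (T.erase i) := by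
  rcases h with ⟨rfl, hi⟩ | ⟨rfl, hi⟩
  · rw [Finset.insert_eq_self.mpr hi]; ring
  · rw [Finset.erase_eq_of_notMem hi]; ring

lemma sdiff_insert_left {A T : Finset (Fin n)} {i : Fin n} (hi : i ∉ A) :
    insert i T \ A = insert i (T \ insert i A) := by
  ext x
  rcases eq_or_ne x i with rfl | hx
  · simp [hi]
  · simp [Finset.mem_sdiff, Finset.mem_insert, hx]

lemma sdiff_erase_left {A T : Finset (Fin n)} {i : Fin n} :
    T.erase i \ A = T \ insert i A := by
  ext x
  simp only [Finset.mem_sdiff, Finset.mem_erase, Finset.mem_insert]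
  tauto

/-- The discrete derivative of the partial extension, as a sum of discrete derivatives of `f`. -/
lemma D_eq_sum (f : Finset (Fin n) → ℝ) (p : Fin n → ℝ) {A : Finset (Fin n)} {i : Fin n}
    (hi : i ∉ A) (T : Finset (Fin n)) :
    ext f p A (insert i T) - ext f p A (T.erase i)
      = ∑ S ∈ A.powerset,
          (f (insert i (S ∪ (T \ insert i A))) - f (S ∪ (T \ insert i A))) *
            ((∏ j ∈ S, p j) * ∏ j ∈ A \ S, (1 - p j)) := by
  unfold ext
  rw [← Finset.sum_sub_distrib]
  refine Finset.sum_congr rfl fun S hS => ?_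
  rw [Finset.mem_powerset] at hS
  have hiS : i ∉ S := fun h => hi (hS h)
  have e1 : S ∪ (insert i T \ A) = insert i (S ∪ (T \ insert i A)) := by
    rw [sdiff_insert_left hi]
    ext x
    simp only [Finset.mem_union, Finset.mem_insert]
    tauto
  have e2 : S ∪ (T.erase i \ A) = S ∪ (T \ insert i A) := by rw [sdiff_erase_left]
  rw [e1, e2]
  ring

lemma D_anti {f : Finset (Fin n) → ℝ} {p : Fin n → ℝ} (hf : Submodular f)
    (hp0 : ∀ j, 0 ≤ p j) (hp1 : ∀ j, p j ≤ 1) {A : Finset (Fin n)} {i : Fin n}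
    (hi : i ∉ A) {T T' : Finset (Fin n)} (hTT : T ⊆ T') :
    ext f p A (insert i T') - ext f p A (T'.erase i)
      ≤ ext f p A (insert i T) - ext f p A (T.erase i) := by
  rw [D_eq_sum f p hi, D_eq_sum f p hi]
  refine Finset.sum_le_sum fun S hS => ?_
  rw [Finset.mem_powerset] at hS
  have hiS : i ∉ S := fun h => hi (hS h)
  have hw : 0 ≤ (∏ j ∈ S, p j) * ∏ j ∈ A \ S, (1 - p j) :=
    mul_nonneg (Finset.prod_nonneg fun j _ => hp0 j)
      (Finset.prod_nonneg fun j _ => by linarith [hp1 j])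
  refine mul_le_mul_of_nonneg_right ?_ hw
  have hsub : S ∪ (T \ insert i A) ⊆ S ∪ (T' \ insert i A) :=
    Finset.union_subset_union_right (Finset.sdiff_subset_sdiff hTT le_rfl)
  have hiU : i ∉ S ∪ (T' \ insert i A) := by
    intro h
    rcases Finset.mem_union.mp h with h | h
    · exact hiS h
    · exact (Finset.mem_sdiff.mp h).2 (Finset.mem_insert_self i A)
  exact hf _ _ hsub i hiU

lemma D_congr (f : Finset (Fin n) → ℝ) (p : Fin n → ℝ) {A : Finset (Fin n)} {i : Fin n}
    (hi : i ∉ A) {T T' : Finset (Fin n)} (h : T \ insert i A = T' \ insert i A) :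
    ext f p A (insert i T) - ext f p A (T.erase i)
      = ext f p A (insert i T') - ext f p A (T'.erase i) := by
  rw [D_eq_sum f p hi, D_eq_sum f p hi, h]

end Aux14

namespace Aux14
open MeasureTheory
variable {n : ℕ} {Ω : Type} [MeasurableSpace Ω] {μ : Measure Ω}

local instance : MeasurableSpace (Finset (Fin n)) := ⊤

lemma measurable_S {X : Fin n → Ω → ℝ} (hmeas : ∀ i, Measurable (X i)) :
    Measurable (fun ω => Finset.univ.filter (fun i => X i ω = 1)) := by
  apply measurable_to_countable'
  intro T
  have : (fun ω => Finset.univ.filter (fun i => X i ω = 1)) ⁻¹' {T}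
      = ⋂ i : Fin n, {ω | (X i ω = 1) ↔ (i ∈ T)} := by
    ext ω
    simp only [Set.mem_preimage, Set.mem_singleton_iff, Set.mem_iInter, Set.mem_setOf_eq,
      Finset.ext_iff, Finset.mem_filter, Finset.mem_univ, true_and]
  rw [this]
  refine MeasurableSet.iInter fun i => ?_
  by_cases hT : i ∈ T
  · simp only [hT, iff_true]
    exact (hmeas i) (measurableSet_singleton 1)
  · simp only [hT, iff_false]
    exact ((hmeas i) (measurableSet_singleton 1)).compl

lemma integrable_comp [IsProbabilityMeasure μ] {X : Fin n → Ω → ℝ}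
    (hmeas : ∀ i, Measurable (X i)) (ρ : Finset (Fin n) → ℝ) :
    Integrable (fun ω => ρ (Finset.univ.filter (fun i => X i ω = 1))) μ := by
  have hm : Measurable (fun ω => ρ (Finset.univ.filter (fun i => X i ω = 1))) :=
    measurable_from_top.comp (measurable_S hmeas)
  refine Integrable.mono' (integrable_const (∑ T : Finset (Fin n), |ρ T|))
    hm.aestronglyMeasurable (ae_of_all μ fun ω => ?_)
  calc ‖ρ (Finset.univ.filter (fun i => X i ω = 1))‖
      = |ρ (Finset.univ.filter (fun i => X i ω = 1))| := rfl
    _ ≤ ∑ T : Finset (Fin n), |ρ T| :=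
        Finset.single_le_sum (fun T _ => abs_nonneg (ρ T)) (Finset.mem_univ _)

end Aux14

namespace Aux14
variable {n : ℕ}

noncomputable def Dex (f : Finset (Fin n) → ℝ) (p : Fin n → ℝ) (A : Finset (Fin n))
    (i : Fin n) (T : Finset (Fin n)) : ℝ :=
  ext f p A (insert i T) - ext f p A (T.erase i)

lemma Dex_anti {f : Finset (Fin n) → ℝ} {p : Fin n → ℝ} (hf : Submodular f)
    (hp0 : ∀ j, 0 ≤ p j) (hp1 : ∀ j, p j ≤ 1) {A : Finset (Fin n)} {i : Fin n}
    (hi : i ∉ A) {T T' : Finset (Fin n)} (hTT : T ⊆ T') :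
    Dex f p A i T' ≤ Dex f p A i T :=
  D_anti hf hp0 hp1 hi hTT

lemma Dex_congr (f : Finset (Fin n) → ℝ) (p : Fin n → ℝ) {A : Finset (Fin n)} {i : Fin n}
    (hi : i ∉ A) {T T' : Finset (Fin n)} (h : T \ insert i A = T' \ insert i A) :
    Dex f p A i T = Dex f p A i T' :=
  D_congr f p hi h

end Aux14

/-- A negatively associated `{0,1}`-valued random vector satisfies submodular dominance:
`E[f({i : X_i = 1})] ≥ F(E[X_1], …, E[X_n])` for every submodular `f`. -/
theorem statement14 (n : ℕ)
    (Ω : Type) [MeasurableSpace Ω] (μ : Measure Ω) [IsProbabilityMeasure μ]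
    (X : Fin n → Ω → ℝ) (hmeas : ∀ i, Measurable (X i))
    (h01 : ∀ i ω, X i ω = 0 ∨ X i ω = 1)
    (hNA : NegAssoc μ X)
    (f : Finset (Fin n) → ℝ) (hf : Submodular f) :
    multilinear f (fun i => ∫ ω, X i ω ∂μ) ≤
      ∫ ω, f (Finset.univ.filter (fun i => X i ω = 1)) ∂μ := by
  classical
  set p : Fin n → ℝ := fun i => ∫ ω, X i ω ∂μ with hp
  set S : Ω → Finset (Fin n) := fun ω => Finset.univ.filter (fun i => X i ω = 1) with hSdef
  have hmem : ∀ i ω, i ∈ S ω ↔ X i ω = 1 := by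
    intro i ω; simp [hSdef]
  have hXval : ∀ i ω, X i ω = if i ∈ S ω then 1 else 0 := by
    intro i ω
    rcases h01 i ω with h | h <;> simp [hmem, h]
  have hint : ∀ ρ : Finset (Fin n) → ℝ, Integrable (fun ω => ρ (S ω)) μ :=
    fun ρ => Aux14.integrable_comp hmeas ρ
  have hintX : ∀ i, Integrable (X i) μ := fun i =>
    (hint (fun T => if i ∈ T then (1:ℝ) else 0)).congr
      (ae_of_all _ fun ω => (hXval i ω).symm)
  have hp0 : ∀ j, 0 ≤ p j := fun j =>
    integral_nonneg fun ω => by rcases h01 j ω with h | h <;> simp [h]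
  have hp1 : ∀ j, p j ≤ 1 := by
    intro j
    have h := integral_mono (hintX j) (integrable_const (1:ℝ))
      (fun ω => by rcases h01 j ω with h | h <;> simp [h])
    simpa using h
  have step : ∀ (i : Fin n) (A : Finset (Fin n)), i ∉ A →
      ∫ ω, Aux14.ext f p (insert i A) (S ω) ∂μ ≤ ∫ ω, Aux14.ext f p A (S ω) ∂μ := by
    intro i A hiA
    have hNAi := hNA (fun x => x i)
      (fun x => -(Aux14.Dex f p A i (Finset.univ.filter (fun j => 1 ≤ x j))))
      {i} (insert i A)ᶜ
      (fun x y hxy => hxy i)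
      (fun x y hxy => by
        have hsub : (Finset.univ.filter (fun j => 1 ≤ x j))
            ⊆ Finset.univ.filter (fun j => 1 ≤ y j) := by
          intro j hj
          rw [Finset.mem_filter] at hj ⊢
          exact ⟨hj.1, le_trans hj.2 (hxy j)⟩
        exact neg_le_neg (Aux14.Dex_anti hf hp0 hp1 hiA hsub))
      (by
        rw [Finset.disjoint_left]
        intro j hj hj'
        rw [Finset.mem_singleton] at hj
        rw [hj] at hj'
        exact (Finset.mem_compl.mp hj') (Finset.mem_insert_self i A))
      (fun x y hxy => by simp only; rw [hxy i (Finset.mem_singleton_self i)])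
      (fun x y hxy => by
        simp only [neg_inj]
        apply Aux14.Dex_congr f p hiA
        ext j
        simp only [Finset.mem_sdiff, Finset.mem_filter, Finset.mem_univ, true_and]
        constructor
        · rintro ⟨h1, h2⟩
          exact ⟨(hxy j (Finset.mem_compl.mpr h2)) ▸ h1, h2⟩
        · rintro ⟨h1, h2⟩
          exact ⟨(hxy j (Finset.mem_compl.mpr h2)).symm ▸ h1, h2⟩)
    have hfilt : ∀ ω, (Finset.univ.filter (fun j => 1 ≤ X j ω)) = S ω := by
      intro ω
      rw [hSdef]
      apply Finset.filter_congr
      intro j _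
      rcases h01 j ω with h | h <;> rw [h] <;> norm_num
    simp only [hfilt] at hNAi
    have hID : Integrable (fun ω => Aux14.Dex f p A i (S ω)) μ := hint _
    have hIXD : Integrable (fun ω => X i ω * Aux14.Dex f p A i (S ω)) μ := by
      refine (hint (fun T => (if i ∈ T then (1:ℝ) else 0) * Aux14.Dex f p A i T)).congr
        (ae_of_all _ fun ω => ?_)
      simp only [hXval i ω]
    -- turn hNAi into: p i * ∫ D ≤ ∫ X i * D
    have e1 : (fun ω => X i ω * -(Aux14.Dex f p A i (S ω)))
        = fun ω => -(X i ω * Aux14.Dex f p A i (S ω)) := funext fun ω => by ring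
    rw [e1, integral_neg, integral_neg] at hNAi
    have hkey : p i * ∫ ω, Aux14.Dex f p A i (S ω) ∂μ
        ≤ ∫ ω, X i ω * Aux14.Dex f p A i (S ω) ∂μ := by
      have := hNAi
      rw [mul_neg] at this
      linarith
    have hpw : ∀ ω, Aux14.ext f p A (S ω) - Aux14.ext f p (insert i A) (S ω)
        = X i ω * Aux14.Dex f p A i (S ω) - p i * Aux14.Dex f p A i (S ω) := by
      intro ω
      have hcase : (X i ω = 1 ∧ i ∈ S ω) ∨ (X i ω = 0 ∧ i ∉ S ω) := by
        rcases h01 i ω with h | h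
        · exact Or.inr ⟨h, fun hm => by rw [(hmem i ω).mp hm] at h; norm_num at h⟩
        · exact Or.inl ⟨h, (hmem i ω).mpr h⟩
      rw [Aux14.ext_insert f p hiA (S ω),
        Aux14.ext_pointwise f p A (S ω) i (X i ω) hcase, Aux14.Dex]
      ring
    have hint1 : Integrable (fun ω => Aux14.ext f p A (S ω)) μ := hint _
    have hint2 : Integrable (fun ω => Aux14.ext f p (insert i A) (S ω)) μ := hint _
    have heq : ∫ ω, Aux14.ext f p A (S ω) ∂μ - ∫ ω, Aux14.ext f p (insert i A) (S ω) ∂μ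
        = (∫ ω, X i ω * Aux14.Dex f p A i (S ω) ∂μ)
          - p i * ∫ ω, Aux14.Dex f p A i (S ω) ∂μ := by
      rw [← integral_sub hint1 hint2, ← integral_const_mul, ← integral_sub hIXD (hID.const_mul (p i))]
      exact integral_congr_ae (ae_of_all _ fun ω => hpw ω)
    linarith
  have key : ∀ A : Finset (Fin n), ∫ ω, Aux14.ext f p A (S ω) ∂μ ≤ ∫ ω, f (S ω) ∂μ := by
    intro A
    induction A using Finset.induction_on with
    | empty => simp only [Aux14.ext_empty]; exact le_rfl
    | insert a s h ih => exact le_trans (step _ _ h) ih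
  have hconst : (fun ω => Aux14.ext f p Finset.univ (S ω)) = fun _ => multilinear f p :=
    funext fun ω => Aux14.ext_univ f p (S ω)
  have : multilinear f p = ∫ ω, Aux14.ext f p Finset.univ (S ω) ∂μ := by
    rw [hconst, integral_const]
    simp
  rw [this]
  exact key Finset.univ
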